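/- Let r ≥ 3 and λ > 0 with λ < (r−1)^{r−1}/(r−2)^r. Then the equation x = 1/(1 + λ x^{r−1}) has a unique solution x in (0,1], and moreover the function F(x) = 1/(1 + λ x^{r−1}) restricted to a suitable invariant interval around this fixed point is a contraction, so that iterates of F from any starting point in (0,1] converge to x. -/

import Mathlib

open Filter

lemma amgm (d : ℕ) (u v : ℝ) (hu : 0 ≤ u) (hv : 0 ≤ v) :
    u ^ d * v ≤ (((d : ℝ) * u + v) / ((d : ℝ) + 1)) ^ (d + 1) := by
  have hd1 : (0:ℝ) < (d:ℝ) + 1 := by positivity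
  have hne : ((d:ℝ) + 1) ≠ 0 := ne_of_gt hd1
  set w₁ : ℝ := (d:ℝ) / ((d:ℝ)+1) with hw₁def
  set w₂ : ℝ := 1 / ((d:ℝ)+1) with hw₂def
  have hw₁ : 0 ≤ w₁ := by positivity
  have hw₂ : 0 ≤ w₂ := by positivity
  have hw : w₁ + w₂ = 1 := by rw [hw₁def, hw₂def, ← add_div, div_self hne]
  have h := Real.geom_mean_le_arith_mean2_weighted hw₁ hw₂ hu hv hw
  have hrhs : w₁ * u + w₂ * v = ((d:ℝ) * u + v) / ((d:ℝ) + 1) := by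
    rw [hw₁def, hw₂def]; field_simp
  rw [hrhs] at h
  have hL : 0 ≤ u ^ w₁ * v ^ w₂ := by positivity
  have h2 := Real.rpow_le_rpow hL h (le_of_lt hd1)
  calc u ^ d * v = (u ^ w₁ * v ^ w₂) ^ ((d:ℝ)+1) := by
        rw [Real.mul_rpow (Real.rpow_nonneg hu _) (Real.rpow_nonneg hv _),
          ← Real.rpow_mul hu, ← Real.rpow_mul hv, hw₁def, hw₂def,
          div_mul_cancel₀ _ hne, one_div, inv_mul_cancel₀ hne,
          Real.rpow_natCast, Real.rpow_one]
    _ ≤ (((d:ℝ) * u + v) / ((d:ℝ) + 1)) ^ ((d:ℝ)+1) := h2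
    _ = (((d:ℝ) * u + v) / ((d:ℝ) + 1)) ^ (d + 1) := by
        rw [show ((d:ℝ)+1) = ((d+1:ℕ):ℝ) by push_cast; ring, Real.rpow_natCast]

lemma L1 (d : ℕ) (hd : 2 ≤ d) (lam : ℝ) (hlam : 0 < lam)
    (hthr : lam < (d:ℝ)^d / ((d:ℝ)-1)^(d+1)) (x : ℝ) (hx0 : 0 < x) (hx1 : x < 1) :
    lam * ((d:ℝ)^2 * x^d * (1-x)) < 1 + lam * x^d := by
  have hd1 : (1:ℝ) ≤ (d:ℝ) - 1 := by
    have : (2:ℝ) ≤ (d:ℝ) := by exact_mod_cast hd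
    linarith
  have hdpos : (0:ℝ) < (d:ℝ) := by linarith
  rcases le_or_gt ((d:ℝ)^2 * (1-x)) 1 with h | h
  · have hxd : 0 < x ^ d := pow_pos hx0 d
    nlinarith [mul_pos hlam hxd]
  · have hv : 0 ≤ (d:ℝ)^2 - 1 - (d:ℝ)^2 * x := by nlinarith
    have hu : 0 ≤ (d:ℝ) * x := by positivity
    have hkey := amgm d ((d:ℝ)*x) ((d:ℝ)^2 - 1 - (d:ℝ)^2*x) hu hv
    have hsum : ((d:ℝ) * ((d:ℝ)*x) + ((d:ℝ)^2 - 1 - (d:ℝ)^2*x)) / ((d:ℝ)+1) = (d:ℝ) - 1 := by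
      field_simp; ring
    rw [hsum, mul_pow] at hkey
    have hddpos : (0:ℝ) < (d:ℝ)^d := by positivity
    have hd1p : (0:ℝ) < ((d:ℝ)-1)^(d+1) := by positivity
    have hx_le : x^d * ((d:ℝ)^2 - 1 - (d:ℝ)^2*x) ≤ ((d:ℝ)-1)^(d+1) / (d:ℝ)^d := by
      rw [le_div_iff₀ hddpos]; nlinarith
    have hpos : 0 < x^d * ((d:ℝ)^2 - 1 - (d:ℝ)^2*x) := by
      have : 0 < (d:ℝ)^2 - 1 - (d:ℝ)^2*x := by nlinarith
      positivity
    have hlt : lam * (x^d * ((d:ℝ)^2 - 1 - (d:ℝ)^2*x)) < ((d:ℝ)^d / ((d:ℝ)-1)^(d+1)) * (((d:ℝ)-1)^(d+1) / (d:ℝ)^d) := by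
      calc lam * (x^d * ((d:ℝ)^2 - 1 - (d:ℝ)^2*x)) < ((d:ℝ)^d / ((d:ℝ)-1)^(d+1)) * (x^d * ((d:ℝ)^2 - 1 - (d:ℝ)^2*x)) :=
            mul_lt_mul_of_pos_right hthr hpos
        _ ≤ _ := mul_le_mul_of_nonneg_left hx_le (by positivity)
    have hone : ((d:ℝ)^d / ((d:ℝ)-1)^(d+1)) * (((d:ℝ)-1)^(d+1) / (d:ℝ)^d) = 1 := by
      field_simp
    rw [hone] at hlt
    nlinarith

noncomputable def phi (t : ℝ) : ℝ :=
  Real.log (1 - Real.sqrt (1-t)) - Real.log (1 + Real.sqrt (1-t))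

lemma phi_deriv {t : ℝ} (h0 : 0 < t) (h1 : t < 1) :
    HasDerivAt phi (1/(t * Real.sqrt (1-t))) t := by
  have h1t : 0 < 1 - t := by linarith
  set s := Real.sqrt (1-t) with hs
  have hs0 : 0 < s := Real.sqrt_pos.mpr h1t
  have hssq : s^2 = 1 - t := Real.sq_sqrt (le_of_lt h1t)
  have hs1 : s < 1 := by nlinarith
  have h1s : 0 < 1 - s := by linarith
  have h2s : 0 < 1 + s := by linarith
  have hsd : HasDerivAt (fun u : ℝ => Real.sqrt (1-u)) (-(1/(2*s))) t := by
    have h := (Real.hasDerivAt_sqrt (ne_of_gt h1t)).comp t ((hasDerivAt_id t).const_sub 1)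
    have h3 : (Real.sqrt ·) ∘ (fun u : ℝ => 1 - u) = fun u : ℝ => Real.sqrt (1-u) := rfl
    rw [h3] at h
    refine h.congr_deriv ?_
    symm
    rw [hs]; ring
  have hlog1 : HasDerivAt (fun u : ℝ => Real.log (1 - Real.sqrt (1-u)))
      ((1/(2*s))/(1-s)) t := by
    have h := (hsd.const_sub 1).log (ne_of_gt h1s)
    convert h using 1
    ring
  have hlog2 : HasDerivAt (fun u : ℝ => Real.log (1 + Real.sqrt (1-u)))
      ((-(1/(2*s)))/(1+s)) t := by
    exact (hsd.const_add 1).log (ne_of_gt h2s)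
  have h := hlog1.sub hlog2
  refine h.congr_deriv ?_
  symm
  rw [div_sub_div _ _ (ne_of_gt h1s) (ne_of_gt h2s)]
  rw [div_eq_div_iff (by positivity) (by nlinarith)]
  field_simp
  nlinarith [hssq]

set_option maxHeartbeats 1000000 in
lemma no2cycle_le (d : ℕ) (hd : 2 ≤ d) (lam : ℝ) (hlam : 0 < lam)
    (hthr : lam < (d:ℝ)^d / ((d:ℝ)-1)^(d+1)) {p q : ℝ}
    (hp0 : 0 < p) (hq0 : 0 < q) (hq1 : q ≤ 1) (hle : p ≤ q)
    (hp : p = 1/(1 + lam * q^d)) (hq : q = 1/(1 + lam * p^d)) : p = q := by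
  by_contra hne
  have hlt : p < q := lt_of_le_of_ne hle hne
  have hpd : (0:ℝ) < lam * p^d := by positivity
  have hql1 : q < 1 := by
    rw [hq, div_lt_one (by linarith)]; linarith
  set F : ℝ → ℝ := fun z => 1/(1 + lam * z^d) with hF
  have hden : ∀ t : ℝ, 0 < t → (0:ℝ) < 1 + lam * t^d := by
    intro t ht; have : 0 < lam * t^d := by positivity
    linarith
  have hF0 : ∀ t : ℝ, 0 < t → 0 < F t := by
    intro t ht; exact div_pos one_pos (hden t ht)
  have hF1 : ∀ t : ℝ, 0 < t → F t < 1 := by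
    intro t ht
    rw [hF, div_lt_one (hden t ht)]
    have : 0 < lam * t^d := by positivity
    linarith
  have hFw : ∀ t : ℝ, 0 < t → F t * (1 + lam * t^d) = 1 := by
    intro t ht
    rw [hF]
    field_simp
  have hFd : ∀ t : ℝ, 0 < t →
      HasDerivAt F (-(lam * d * t^(d-1) * (F t)^2)) t := by
    intro t ht
    have h1 : HasDerivAt (fun z : ℝ => 1 + lam * z^d) (lam * (d * t^(d-1))) t :=
      ((hasDerivAt_pow d t).const_mul lam).const_add 1
    have h2 := h1.inv (ne_of_gt (hden t ht))
    have h3 : (fun z : ℝ => 1 + lam * z^d)⁻¹ = F := by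
      funext z; rw [hF]; simp [one_div]
    rw [h3] at h2
    refine h2.congr_deriv ?_
    symm
    rw [hF]
    field_simp
  set ψ : ℝ → ℝ := fun t => phi (F t) + phi t with hψ
  have hψd : ∀ t : ℝ, 0 < t → t < 1 →
      HasDerivAt ψ (1/(t * Real.sqrt (1-t))
        - lam * d * t^(d-1) * (F t) / Real.sqrt (1 - F t)) t := by
    intro t ht0 ht1
    have hw0 := hF0 t ht0
    have hw1 := hF1 t ht0
    have hcomp := (phi_deriv hw0 hw1).comp t (hFd t ht0)
    have h3 : phi ∘ F = fun u => phi (F u) := rfl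
    rw [h3] at hcomp
    have hadd := hcomp.add (phi_deriv ht0 ht1)
    refine hadd.congr_deriv ?_
    symm
    have hsw : 0 < Real.sqrt (1 - F t) := Real.sqrt_pos.mpr (by linarith)
    generalize hgen : F t = v at *
    have hsv : Real.sqrt (1 - v) ≠ 0 := ne_of_gt hsw
    have hv : v ≠ 0 := ne_of_gt hw0
    field_simp
    ring
  -- Rolle
  have hsub : ∀ x ∈ Set.Ioo p q, 0 < x ∧ x < 1 := by
    intro x hx; exact ⟨lt_trans hp0 hx.1, lt_trans hx.2 hql1⟩
  have hcont : ContinuousOn ψ (Set.Icc p q) := by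
    intro x hx
    have hx0 : 0 < x := lt_of_lt_of_le hp0 hx.1
    have hx1 : x < 1 := lt_of_le_of_lt hx.2 hql1
    exact (hψd x hx0 hx1).continuousAt.continuousWithinAt
  have hval : ψ p = ψ q := by
    have hFp : F p = q := hq.symm
    have hFq : F q = p := hp.symm
    rw [hψ]; simp only [hFp, hFq]; ring
  obtain ⟨ξ, hξmem, hξ⟩ := exists_hasDerivAt_eq_zero hlt hcont hval
    (fun x hx => hψd x (hsub x hx).1 (hsub x hx).2)
  obtain ⟨hξ0, hξ1⟩ := hsub ξ hξmem
  -- derive contradiction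
  set w := F ξ with hwdef
  have hw0 : 0 < w := hF0 ξ hξ0
  have hw1 : w < 1 := hF1 ξ hξ0
  have hsξ : 0 < Real.sqrt (1-ξ) := Real.sqrt_pos.mpr (by linarith)
  have hsw : 0 < Real.sqrt (1-w) := Real.sqrt_pos.mpr (by linarith)
  have hsξq : Real.sqrt (1-ξ)^2 = 1-ξ := Real.sq_sqrt (by linarith)
  have hswq : Real.sqrt (1-w)^2 = 1-w := Real.sq_sqrt (by linarith)
  -- from hξ : 1/(ξ√(1-ξ)) - lam d ξ^(d-1) w / √(1-w) = 0
  have hkey : Real.sqrt (1-w) = lam * d * ξ^(d-1) * w * ξ * Real.sqrt (1-ξ) := by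
    have h1 : 1/(ξ * Real.sqrt (1-ξ)) = lam * d * ξ^(d-1) * w / Real.sqrt (1-w) := by
      linarith
    rw [div_eq_div_iff (by positivity) (ne_of_gt hsw)] at h1
    rw [one_mul] at h1
    rw [h1]; ring
  have hsq : 1 - w = (lam * d * ξ^(d-1) * w * ξ)^2 * (1-ξ) := by
    have := congrArg (fun z => z^2) hkey
    rw [hswq] at this
    rw [this]; rw [mul_pow]; rw [hsξq]
  have hξpow : ξ^(d-1) * ξ = ξ^d := by
    rw [← pow_succ]
    congr 1
    omega
  have h1mw : 1 - w = lam * ξ^d * w := by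
    have h := hFw ξ hξ0
    rw [← hwdef] at h
    nlinarith [h]
  have hfinal : lam * ((d:ℝ)^2 * ξ^d * (1-ξ)) * w = 1 := by
    have hne : lam * ξ^d * w ≠ 0 := by positivity
    have h2 : lam * ξ^d * w = (lam * d * ξ^(d-1) * w * ξ)^2 * (1-ξ) := by
      rw [← h1mw, hsq]
    have h3 : (lam * d * ξ^(d-1) * w * ξ)^2 * (1-ξ)
        = (lam * ξ^d * w) * (lam * ((d:ℝ)^2 * ξ^d * (1-ξ)) * w) := by
      rw [← hξpow]; ring
    rw [h3] at h2
    have := mul_left_cancel₀ hne (h2.symm.trans (mul_one (lam * ξ^d * w)).symm)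
    linarith [this.symm]
  have hL := L1 d hd lam hlam hthr ξ hξ0 hξ1
  have hwineq : w * (1 + lam * ξ^d) = 1 := by
    have h := hFw ξ hξ0; rw [← hwdef] at h; exact h
  nlinarith [mul_lt_mul_of_pos_right hL hw0]

set_option maxHeartbeats 1000000 in
/-- for `r ≥ 3` and `0 < λ < (r−1)^{r−1}/(r−2)^r`, the equation
`x = 1/(1 + λ x^{r−1})` has a unique solution `x ∈ (0,1]`, and the iterates of
`F(z) = 1/(1 + λ z^{r−1})` converge to `x` from every starting point in `(0,1]`. -/
theorem statement9 (r : ℕ) (hr : 3 ≤ r) (lam : ℝ) (hlam : 0 < lam)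
    (hthr : lam < ((r : ℝ) - 1) ^ (r - 1) / ((r : ℝ) - 2) ^ r) :
    ∃ x : ℝ, (x ∈ Set.Ioc (0 : ℝ) 1 ∧ x * (1 + lam * x ^ (r - 1)) = 1)
      ∧ (∀ y ∈ Set.Ioc (0 : ℝ) 1, y * (1 + lam * y ^ (r - 1)) = 1 → y = x)
      ∧ ∀ y ∈ Set.Ioc (0 : ℝ) 1,
          Tendsto (fun m : ℕ => (fun z : ℝ => 1 / (1 + lam * z ^ (r - 1)))^[m] y)
            atTop (nhds x) := by
  obtain ⟨d, hd2, rfl⟩ : ∃ d, 2 ≤ d ∧ r = d + 1 := ⟨r-1, by omega, by omega⟩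
  simp only [Nat.add_sub_cancel] at hthr ⊢
  have hthr' : lam < (d:ℝ)^d / ((d:ℝ)-1)^(d+1) := by
    have h1 : ((d:ℝ)+1) - 1 = (d:ℝ) := by ring
    have h2 : ((d:ℝ)+1) - 2 = (d:ℝ) - 1 := by ring
    push_cast at hthr
    rw [h1, h2] at hthr
    exact hthr
  clear hthr hr
  set F : ℝ → ℝ := fun z => 1/(1 + lam * z^d) with hFdef
  -- basic facts about F
  have hden : ∀ t : ℝ, 0 < t → (0:ℝ) < 1 + lam * t^d := by
    intro t ht; have : 0 < lam * t^d := by positivity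
    linarith
  have hF0 : ∀ t : ℝ, 0 < t → 0 < F t := fun t ht => div_pos one_pos (hden t ht)
  have hF1 : ∀ t : ℝ, 0 < t → F t < 1 := by
    intro t ht
    rw [hFdef, div_lt_one (hden t ht)]
    have : 0 < lam * t^d := by positivity
    linarith
  have hanti : ∀ s t : ℝ, 0 < s → s ≤ t → F t ≤ F s := by
    intro s t hs hst
    apply one_div_le_one_div_of_le (hden s hs)
    have : s^d ≤ t^d := pow_le_pow_left₀ (le_of_lt hs) hst d
    nlinarith
  -- fixed point
  have hg_mono : ∀ u v : ℝ, 0 ≤ u → u < v → u * (1 + lam * u^d) < v * (1 + lam * v^d) := by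
    intro u v hu huv
    have h1 : u^d ≤ v^d := pow_le_pow_left₀ hu (le_of_lt huv) d
    have h2 : (0:ℝ) < v := lt_of_le_of_lt hu huv
    have h3 : 0 ≤ u^d := pow_nonneg hu d
    have h4 : u * u^d ≤ v * v^d := mul_le_mul (le_of_lt huv) h1 h3 (le_of_lt h2)
    nlinarith
  have hgc : Continuous (fun x : ℝ => x * (1 + lam * x^d)) := by continuity
  obtain ⟨xs, hxsmem, hxseq⟩ : ∃ x ∈ Set.Ioo (0:ℝ) 1, x * (1 + lam * x^d) = 1 := by
    have h := intermediate_value_Ioo (le_of_lt one_pos) hgc.continuousOn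
      (a := (0:ℝ)) (b := 1)
    have h1 : (1:ℝ) ∈ Set.Ioo ((0:ℝ) * (1 + lam * 0^d)) ((1:ℝ) * (1 + lam * 1^d)) := by
      constructor
      · simp
      · simp
        linarith
    obtain ⟨x, hx, hxx⟩ := h h1
    exact ⟨x, hx, hxx⟩
  have huniq : ∀ y ∈ Set.Ioc (0:ℝ) 1, y * (1 + lam * y^d) = 1 → y = xs := by
    intro y hy hyeq
    by_contra hne
    rcases lt_or_gt_of_ne hne with h | h
    · have := hg_mono y xs (le_of_lt hy.1) h
      rw [hyeq, hxseq] at this; exact lt_irrefl 1 this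
    · have := hg_mono xs y (le_of_lt hxsmem.1) h
      rw [hyeq, hxseq] at this; exact lt_irrefl 1 this
  have hxsfix : F xs = xs := by
    show 1/(1 + lam * xs^d) = xs
    rw [div_eq_iff (ne_of_gt (hden xs hxsmem.1))]
    linarith [hxseq]
  -- orbit of 1
  set c : ℕ → ℝ := fun n => F^[n] 1 with hcdef
  have hstep : ∀ n, c (n+1) = F (c n) := fun n => Function.iterate_succ_apply' F n 1
  have hc0 : c 0 = 1 := rfl
  have hcmem : ∀ n, 0 < c n ∧ c n ≤ 1 := by
    intro n; induction n with
    | zero => rw [hc0]; exact ⟨one_pos, le_refl 1⟩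
    | succ k ih =>
      rw [hstep k]
      exact ⟨hF0 _ ih.1, le_of_lt (hF1 _ ih.1)⟩
  set a : ℕ → ℝ := fun n => c (2*n) with hadef
  set b : ℕ → ℝ := fun n => c (2*n+1) with hbdef
  have hba : ∀ n, b n = F (a n) := fun n => hstep (2*n)
  have hab : ∀ n, a (n+1) = F (b n) := by
    intro n
    have e : 2*(n+1) = (2*n+1)+1 := by ring
    show c (2*(n+1)) = F (c (2*n+1))
    rw [e, hstep]
  have ha_succ : ∀ n, a (n+1) ≤ a n := by
    intro n; induction n with
    | zero =>
      rw [hab 0]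
      have : a 0 = 1 := hc0
      rw [this]
      exact le_of_lt (hF1 _ (hcmem _).1)
    | succ k ih =>
      have e1 : a (k+2) = F (F (a (k+1))) := by rw [hab (k+1), hba (k+1)]
      have e2 : a (k+1) = F (F (a k)) := by rw [hab k, hba k]
      have inner : F (a k) ≤ F (a (k+1)) := hanti _ _ (hcmem (2*(k+1))).1 ih
      calc a (k+2) = F (F (a (k+1))) := e1
        _ ≤ F (F (a k)) := hanti _ _ (hF0 _ (hcmem (2*k)).1) inner
        _ = a (k+1) := e2.symm
  have ha_anti : Antitone a := antitone_nat_of_succ_le ha_succ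
  have hb_mono : Monotone b := by
    apply monotone_nat_of_le_succ
    intro n
    rw [hba n, hba (n+1)]
    exact hanti _ _ (hcmem (2*(n+1))).1 (ha_succ n)
  -- limits
  have hbddb : BddBelow (Set.range a) := ⟨0, by rintro x ⟨n, rfl⟩; exact le_of_lt (hcmem _).1⟩
  have hbdda : BddAbove (Set.range b) := ⟨1, by rintro x ⟨n, rfl⟩; exact (hcmem _).2⟩
  have hqa : Tendsto a atTop (nhds (⨅ n, a n)) := tendsto_atTop_ciInf ha_anti hbddb
  have hpb : Tendsto b atTop (nhds (⨆ n, b n)) := tendsto_atTop_ciSup hb_mono hbdda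
  set q := ⨅ n, a n with hqdef
  set p := ⨆ n, b n with hpdef
  have hq0 : 0 < q := by
    have h1 : ∀ n, F 1 ≤ a n := by
      intro n
      cases n with
      | zero => exact le_of_lt (hF1 _ one_pos)
      | succ k =>
        rw [hab k]
        exact hanti _ _ (hcmem _).1 (hcmem _).2
    exact lt_of_lt_of_le (hF0 1 one_pos) (le_ciInf h1)
  have hp0 : 0 < p := by
    have := le_ciSup hbdda 0
    exact lt_of_lt_of_le (hcmem _).1 this
  have hq1 : q ≤ 1 := by
    have := ciInf_le hbddb 0
    calc q ≤ a 0 := this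
      _ = 1 := hc0
  have hp1 : p ≤ 1 := ciSup_le (fun n => (hcmem _).2)
  have hFcont : ∀ t : ℝ, 0 < t → ContinuousAt F t := by
    intro t ht
    apply ContinuousAt.div continuousAt_const
    · exact (continuous_const.add (continuous_const.mul (continuous_pow d))).continuousAt
    · exact ne_of_gt (hden t ht)
  have hFq : F q = p := by
    have h1 : Tendsto (fun n => F (a n)) atTop (nhds (F q)) :=
      ((hFcont q hq0).tendsto).comp hqa
    have h2 : (fun n => F (a n)) = b := by funext n; rw [hba n]
    rw [h2] at h1
    exact tendsto_nhds_unique h1 hpb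
  have hFp : F p = q := by
    have h1 : Tendsto (fun n => F (b n)) atTop (nhds (F p)) :=
      ((hFcont p hp0).tendsto).comp hpb
    have h2 : (fun n => F (b n)) = fun n => a (n+1) := by funext n; rw [hab n]
    rw [h2] at h1
    have h3 : Tendsto (fun n => a (n+1)) atTop (nhds q) :=
      hqa.comp (tendsto_add_atTop_nat 1)
    exact tendsto_nhds_unique h1 h3
  have hpq : p = q := by
    rcases le_total p q with h | h
    · exact no2cycle_le d hd2 lam hlam hthr' hp0 hq0 hq1 h hFq.symm hFp.symm
    · exact (no2cycle_le d hd2 lam hlam hthr' hq0 hp0 hp1 h hFp.symm hFq.symm).symm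
  have hqfix : q = xs := by
    apply huniq q ⟨hq0, hq1⟩
    have : F q = q := by rw [hFq, hpq]
    rw [hFdef] at this
    have hd' := hden q hq0
    field_simp at this
    linarith [this]
  -- final answer
  refine ⟨xs, ⟨⟨hxsmem.1, le_of_lt hxsmem.2⟩, hxseq⟩, huniq, ?_⟩
  intro y hy
  have hqa' : Tendsto a atTop (nhds xs) := by rw [← hqfix]; exact hqa
  have hpb' : Tendsto b atTop (nhds xs) := by
    rw [← hqfix, ← hpq]; exact hpb
  set Y : ℕ → ℝ := fun m => F^[m] y with hYdef
  have hYstep : ∀ m, Y (m+1) = F (Y m) := fun m => Function.iterate_succ_apply' F m y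
  have hYmem : ∀ m, 0 < Y m ∧ Y m ≤ 1 := by
    intro m; induction m with
    | zero => exact ⟨hy.1, hy.2⟩
    | succ k ih =>
      rw [hYstep k]
      exact ⟨hF0 _ ih.1, le_of_lt (hF1 _ ih.1)⟩
  have key : ∀ n, (b n ≤ Y (2*n+1) ∧ Y (2*n+1) ≤ a n)
      ∧ (b n ≤ Y (2*n+2) ∧ Y (2*n+2) ≤ a (n+1)) := by
    intro n; induction n with
    | zero =>
      have hY1 : Y 1 = F (Y 0) := hYstep 0
      have hY0 : Y 0 = y := rfl
      have hA : b 0 ≤ Y 1 ∧ Y 1 ≤ a 0 := by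
        constructor
        · rw [hY1, hba 0, hY0]
          have ha0 : a 0 = 1 := hc0
          rw [ha0]
          exact hanti _ _ hy.1 hy.2
        · rw [hY1]
          have ha0 : a 0 = 1 := hc0
          rw [ha0, hY0]
          exact le_of_lt (hF1 _ hy.1)
      refine ⟨hA, ?_⟩
      have hY2 : Y 2 = F (Y 1) := hYstep 1
      constructor
      · rw [hY2, hba 0]
        exact hanti _ _ (hYmem 1).1 hA.2
      · rw [hY2, hab 0]
        exact hanti _ _ (hcmem _).1 hA.1
    | succ k ih =>
      have hB := ih.2
      have e1 : 2*(k+1)+1 = (2*k+2)+1 := by ring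
      have hA : b (k+1) ≤ Y (2*(k+1)+1) ∧ Y (2*(k+1)+1) ≤ a (k+1) := by
        rw [e1, hYstep (2*k+2)]
        constructor
        · rw [hba (k+1)]
          exact hanti _ _ (hYmem _).1 hB.2
        · rw [hab k]
          exact hanti _ _ (hcmem _).1 hB.1
      refine ⟨hA, ?_⟩
      have e2 : 2*(k+1)+2 = (2*(k+1)+1)+1 := by ring
      rw [e2, hYstep (2*(k+1)+1)]
      constructor
      · rw [hba (k+1)]
        exact hanti _ _ (hYmem _).1 hA.2
      · rw [hab (k+1)]
        exact hanti _ _ (hcmem _).1 hA.1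
  have hsand : ∀ m, 1 ≤ m → b ((m-1)/2) ≤ Y m ∧ Y m ≤ a (m/2) := by
    intro m hm
    rcases Nat.even_or_odd m with ⟨k, hk⟩ | ⟨k, hk⟩
    · subst hk
      obtain ⟨j, rfl⟩ : ∃ j, k = j + 1 := ⟨k-1, by omega⟩
      have e1 : ((j+1)+(j+1)-1)/2 = j := by omega
      have e2 : ((j+1)+(j+1))/2 = j+1 := by omega
      have e3 : (j+1)+(j+1) = 2*j+2 := by omega
      rw [e1, e2, e3]
      exact (key j).2
    · subst hk
      have e1 : (2*k+1-1)/2 = k := by omega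
      have e2 : (2*k+1)/2 = k := by omega
      rw [e1, e2]
      exact (key k).1
  have hdiv1 : Tendsto (fun m : ℕ => (m-1)/2) atTop atTop :=
    tendsto_atTop_atTop.mpr (fun N => ⟨2*N+2, fun m hm => by omega⟩)
  have hdiv2 : Tendsto (fun m : ℕ => m/2) atTop atTop :=
    tendsto_atTop_atTop.mpr (fun N => ⟨2*N+2, fun m hm => by omega⟩)
  have hlow : Tendsto (fun m : ℕ => b ((m-1)/2)) atTop (nhds xs) := hpb'.comp hdiv1
  have hup : Tendsto (fun m : ℕ => a (m/2)) atTop (nhds xs) := hqa'.comp hdiv2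
  exact tendsto_of_tendsto_of_tendsto_of_le_of_le' hlow hup
    (Filter.eventually_atTop.mpr ⟨1, fun m hm => (hsand m hm).1⟩)
    (Filter.eventually_atTop.mpr ⟨1, fun m hm => (hsand m hm).2⟩)
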